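/- Let E be a finite-dimensional complex inner product space and T : E →ₗ[ℂ] E a symmetric linear map (⟪T x, y⟫ = ⟪x, T y⟫ for all x, y). Then every eigenspace of T has dimension at most one (T has simple spectrum) if and only if T admits a cyclic vector, i.e. there exists v ∈ E with Submodule.span ℂ (Set.range (fun k : ℕ => (T ^ k) v)) = ⊤. -/

import Mathlib

open InnerProductSpace

open Module Module.End Polynomial in
private lemma aeval_mem_span_aux {E : Type*} [NormedAddCommGroup E] [InnerProductSpace ℂ E]
    (T : E →ₗ[ℂ] E) (v : E) (p : ℂ[X]) :
    (aeval T p) v ∈ Submodule.span ℂ (Set.range fun k : ℕ => (T ^ k) v) := by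
  rw [Polynomial.aeval_eq_sum_range]
  rw [LinearMap.sum_apply]
  refine Submodule.sum_mem _ fun i _ => ?_
  rw [LinearMap.smul_apply]
  exact Submodule.smul_mem _ _ (Submodule.subset_span ⟨i, rfl⟩)

open Module Module.End Polynomial in
/-- A symmetric endomorphism of a finite-dimensional complex inner product space
has simple spectrum (all eigenspaces of dimension at most one) if and only if it
admits a cyclic vector. -/
theorem stmt_3 (E : Type*) [NormedAddCommGroup E] [InnerProductSpace ℂ E]
    [FiniteDimensional ℂ E] (T : E →ₗ[ℂ] E)
    (hT : ∀ x y : E, inner ℂ (T x) y = (inner ℂ x (T y) : ℂ)) :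
    (∀ μ : ℂ, Module.finrank ℂ (Module.End.eigenspace T μ) ≤ 1) ↔
      ∃ v : E, Submodule.span ℂ (Set.range fun k : ℕ => (T ^ k) v) = ⊤ := by
  classical
  have hsym : T.IsSymmetric := hT
  constructor
  · intro hdim
    -- choose an eigenvector for each eigenvalue
    choose w hw using fun μ : Eigenvalues T =>
      Module.End.HasEigenvalue.exists_hasEigenvector μ.2
    set v : E := ∑ μ : Eigenvalues T, w μ with hv
    refine ⟨v, ?_⟩
    set K : Submodule ℂ E := Submodule.span ℂ (Set.range fun k : ℕ => (T ^ k) v) with hK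
    -- each chosen eigenvector lies in K
    have hwK : ∀ μ : Eigenvalues T, w μ ∈ K := by
      intro μ₀
      set p : ℂ[X] := ∏ ν ∈ Finset.univ.erase μ₀, (X - C ν.1) with hp
      have heval : ∀ ν : Eigenvalues T, p.eval ν.1 = ∏ τ ∈ Finset.univ.erase μ₀, (ν.1 - τ.1) := by
        intro ν; simp [hp, eval_prod]
      have havp : (aeval T p) v = p.eval μ₀.1 • w μ₀ := by
        rw [hv, map_sum]
        rw [Finset.sum_eq_single μ₀]
        · rw [aeval_apply_of_hasEigenvector (hw μ₀)]
        · intro ν _ hν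
          rw [aeval_apply_of_hasEigenvector (hw ν), heval ν,
            Finset.prod_eq_zero (Finset.mem_erase.2 ⟨hν, Finset.mem_univ _⟩) (sub_self (ν.1 : ℂ)),
            zero_smul]
        · intro h; exact absurd (Finset.mem_univ μ₀) h
      have hne : p.eval μ₀.1 ≠ 0 := by
        rw [heval]
        refine Finset.prod_ne_zero_iff.2 fun τ hτ => ?_
        have : τ ≠ μ₀ := (Finset.mem_erase.1 hτ).1
        exact sub_ne_zero.2 fun h => this (Subtype.ext h.symm)
      have : w μ₀ = (p.eval μ₀.1)⁻¹ • (aeval T p) v := by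
        rw [havp, smul_smul, inv_mul_cancel₀ hne, one_smul]
      rw [this]
      exact Submodule.smul_mem _ _ (aeval_mem_span_aux T v p)
    -- eigenspaces are contained in K
    have htop : (⨆ μ : ℂ, eigenspace T μ) = ⊤ :=
      Submodule.orthogonal_eq_bot_iff.mp hsym.orthogonalComplement_iSup_eigenspaces_eq_bot
    rw [eq_top_iff, ← htop]
    refine iSup_le fun μ => ?_
    rcases eq_or_ne (eigenspace T μ) ⊥ with h | h
    · rw [h]; exact bot_le
    · -- eigenspace is one-dimensional, spanned by the chosen eigenvector
      set ν : Eigenvalues T := ⟨μ, h⟩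
      have hle : (ℂ ∙ w ν) ≤ eigenspace T μ :=
        Submodule.span_le.2 (Set.singleton_subset_iff.2 (hw ν).1)
      have heq : (ℂ ∙ w ν) = eigenspace T μ := by
        refine Submodule.eq_of_le_of_finrank_le hle ?_
        rw [finrank_span_singleton (hw ν).2]
        exact hdim μ
      rw [← heq, Submodule.span_le, Set.singleton_subset_iff]
      exact hwK ν
  · rintro ⟨v, hv⟩ μ
    by_contra hlt
    push_neg at hlt
    -- find a nonzero eigenvector orthogonal to v
    set V := eigenspace T μ
    set f : V →ₗ[ℂ] ℂ := (innerSL ℂ v).toLinearMap.comp V.subtype with hf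
    have hker : LinearMap.ker f ≠ ⊥ := by
      intro hk
      have := LinearMap.finrank_le_finrank_of_injective
        ((LinearMap.ker_eq_bot (f := f)).1 hk)
      simp only [Module.finrank_self] at this
      omega
    obtain ⟨w, hwker, hwne⟩ := Submodule.exists_mem_ne_zero_of_ne_bot hker
    have hwv : (inner ℂ v (w : E) : ℂ) = 0 := hwker
    have hwv' : (inner ℂ (w : E) v : ℂ) = 0 := by
      rw [← inner_conj_symm, hwv, map_zero]
    have hwvec : Module.End.HasEigenvector T μ (w : E) := ⟨w.2, fun h => hwne (Subtype.ext h)⟩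
    have horth : ∀ k : ℕ, (inner ℂ ((T ^ k) v) (w : E) : ℂ) = 0 := by
      intro k
      rw [(hsym.pow k) v w, hwvec.pow_apply k, inner_smul_right, hwv, mul_zero]
    have : (w : E) ∈ (Submodule.span ℂ (Set.range fun k : ℕ => (T ^ k) v))ᗮ := by
      rw [Submodule.mem_orthogonal]
      intro u hu
      induction hu using Submodule.span_induction with
      | mem x hx => obtain ⟨k, rfl⟩ := hx; exact horth k
      | zero => simp
      | add x y _ _ hx hy => rw [inner_add_left, hx, hy, add_zero]
      | smul c x _ hx => rw [inner_smul_left, hx, mul_zero]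
    rw [hv, Submodule.top_orthogonal_eq_bot, Submodule.mem_bot] at this
    exact hwne (Subtype.ext this)
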